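/- Let a ∈ ℝ and δ > 0, and let f : ℝ → ℂ be differentiable at every point of [a-δ, a] with derivative f' interval-integrable on [a-δ, a]. Then the left-hand local Fourier series of f at a converges with symmetric partial sums, and f(a)/2 = (1/(2δ)) lim_{M→∞} ∑_{n=-M}^{M} e^{iπna/δ} ∫_{a-δ}^{a} f(u) e^{-iπnu/δ} du. -/

import Mathlib

open MeasureTheory Real Filter Topology intervalIntegral


noncomputable def ce (t : ℝ) : ℂ := Complex.exp (↑t * Complex.I)

lemma ce_add (s t : ℝ) : ce (s+t) = ce s * ce t := by
  rw [ce, ce, ce, ← Complex.exp_add]; push_cast; ring_nf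

lemma ce_norm (t : ℝ) : ‖ce t‖ = 1 := Complex.norm_exp_ofReal_mul_I t

lemma ce_sub_neg (t : ℝ) : ce t - ce (-t) = 2 * Complex.I * Complex.sin t := by
  rw [ce, ce, Complex.sin]; push_cast; ring_nf; rw [Complex.I_sq]; ring

lemma ce_continuous : Continuous ce :=
  Complex.continuous_exp.comp (by continuity)

lemma tele (F : ℤ → ℂ) (M : ℕ) :
    ∑ n ∈ Finset.Icc (-(M:ℤ)) (M:ℤ), (F n - F (n-1)) = F M - F (-(M:ℤ)-1) := by
  have h : Finset.Icc (-(M:ℤ)) (M:ℤ) =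
      (Finset.range (2*M+1)).map ⟨fun k : ℕ => (k : ℤ) - M, fun x y h => by
        simp only at h; omega⟩ := by
    ext k
    simp only [Finset.mem_Icc, Finset.mem_map, Finset.mem_range, Function.Embedding.coeFn_mk]
    constructor
    · intro ⟨h1, h2⟩; exact ⟨(k + M).toNat, by omega, show (((k + M).toNat : ℕ) : ℤ) - M = k by omega⟩
    · rintro ⟨x, hx, rfl⟩; show -(M:ℤ) ≤ (x:ℤ) - M ∧ (x:ℤ) - M ≤ M; omega
  rw [h, Finset.sum_map]
  show ∑ x ∈ Finset.range (2*M+1), (F ((x:ℤ) - M) - F ((x:ℤ) - M - 1)) = _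
  have key : ∀ k ∈ Finset.range (2*M+1), (F ((k:ℤ) - M) - F ((k:ℤ) - M - 1))
      = (fun k : ℕ => F ((k:ℤ) - M - 1)) (k+1) - (fun k : ℕ => F ((k:ℤ)-M-1)) k := by
    intro k _
    simp only
    congr 2
    push_cast; ring
  rw [Finset.sum_congr rfl key]
  exact (Finset.sum_range_sub (fun k : ℕ => F ((k:ℤ)-M-1)) (2*M+1)).trans
    (by congr 2 <;> push_cast <;> ring)


lemma dirichlet (x : ℝ) (M : ℕ) :
    (∑ n ∈ Finset.Icc (-(M:ℤ)) (M:ℤ), ce (n * x)) * (ce (x/2) - ce (-(x/2)))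
      = ce (((M:ℝ) + 1/2) * x) - ce (-(((M:ℝ) + 1/2) * x)) := by
  rw [Finset.sum_mul]
  have key : ∀ n ∈ Finset.Icc (-(M:ℤ)) (M:ℤ), ce (n * x) * (ce (x/2) - ce (-(x/2)))
      = (fun n : ℤ => ce (((n:ℝ) + 1/2) * x)) n - (fun n : ℤ => ce (((n:ℝ) + 1/2) * x)) (n-1) := by
    intro n _
    simp only
    rw [mul_sub, ← ce_add, ← ce_add]
    congr 2 <;> push_cast <;> ring
  rw [Finset.sum_congr rfl key]
  exact (tele (fun n : ℤ => ce (((n:ℝ) + 1/2) * x)) M).trans (by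
    congr 2 <;> push_cast <;> ring)

lemma hasDerivAt_ce (c b : ℝ) (u : ℝ) :
    HasDerivAt (fun u : ℝ => ce (c * (b - u))) (-(c:ℂ) * Complex.I * ce (c * (b-u))) u := by
  have h1 : HasDerivAt (fun u : ℝ => ((c * (b - u) : ℝ) : ℂ) * Complex.I) (-(c:ℂ) * Complex.I) u := by
    have : HasDerivAt (fun u : ℝ => (c * (b - u) : ℝ)) (-c) u := by
      simpa using ((hasDerivAt_id u).const_sub b).const_mul c
    simpa using (this.ofReal_comp).mul_const Complex.I
  simpa [ce, mul_comm] using h1.cexp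

lemma int_exp (b δ : ℝ) (c : ℝ) (hc : c ≠ 0) :
    ∫ u in (b-δ)..b, ce (c*(b-u)) = (1 - ce (c*δ)) / (-(Complex.I*c)) := by
  have hF : ∀ u ∈ Set.uIcc (b-δ) b,
      HasDerivAt (fun u : ℝ => ce (c * (b - u)) / (-(Complex.I*c))) (ce (c*(b-u))) u := by
    intro u _
    have := (hasDerivAt_ce c b u).div_const (-(Complex.I*c))
    refine this.congr_deriv ?_
    have : (Complex.I : ℂ) * c ≠ 0 := by
      simp [Complex.ext_iff, hc, Complex.I_ne_zero]
    rw [div_eq_iff (neg_ne_zero.mpr this)]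
    ring
  have hcont : IntervalIntegrable (fun u : ℝ => ce (c * (b - u))) volume (b-δ) b := by
    apply Continuous.intervalIntegrable
    exact Complex.continuous_exp.comp (by continuity)
  rw [intervalIntegral.integral_eq_sub_of_hasDerivAt hF hcont]
  simp [ce]
  have : (Complex.I : ℂ) * c ≠ 0 := by
    simp [Complex.ext_iff, hc, Complex.I_ne_zero]
  have hc' : (c:ℂ) ≠ 0 := by exact_mod_cast hc
  rw [eq_div_iff (neg_ne_zero.mpr this), sub_mul, div_mul_cancel₀ _ (neg_ne_zero.mpr this)]
  field_simp
  ring_nf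
  simp [Complex.I_sq]


lemma ce_int_pi (n : ℤ) : ce (n * π) = (-1 : ℂ)^n := by
  rw [ce]
  push_cast
  rw [mul_assoc, Complex.exp_int_mul, Complex.exp_pi_mul_I]

lemma kernel_int (a δ : ℝ) (hδ : 0 < δ) (M : ℕ) :
    ∑ n ∈ Finset.Icc (-(M:ℤ)) (M:ℤ), ∫ u in (a-δ)..a, ce ((n * (π/δ)) * (a-u)) = (δ : ℂ) := by
  set J : ℤ → ℂ := fun n => if n = 0 then (δ:ℂ) else (1 - (-1:ℂ)^n) / (-(Complex.I * (n * (π/δ))))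
    with hJ
  have hstep : ∀ n ∈ Finset.Icc (-(M:ℤ)) (M:ℤ), (∫ u in (a-δ)..a, ce ((n * (π/δ)) * (a-u))) = J n := by
    intro n _
    rcases eq_or_ne n 0 with rfl | hn
    · simp [hJ, ce]
    · have hc : (n : ℝ) * (π/δ) ≠ 0 := by
        have : (n:ℝ) ≠ 0 := Int.cast_ne_zero.mpr hn
        positivity
      rw [int_exp a δ _ hc, hJ]
      simp only [if_neg hn]
      congr 2
      · congr 1
        rw [show (n:ℝ) * (π/δ) * δ = n * π by field_simp]
        exact ce_int_pi n
      · push_cast; ring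
  rw [Finset.sum_congr rfl hstep]
  -- pairing
  have hsymm : ∑ n ∈ Finset.Icc (-(M:ℤ)) (M:ℤ), J n = ∑ n ∈ Finset.Icc (-(M:ℤ)) (M:ℤ), J (-n) := by
    apply Finset.sum_nbij' (fun n => -n) (fun n => -n) <;> intros <;>
      simp_all [Finset.mem_Icc] <;> omega
  have hpair : ∀ n ∈ Finset.Icc (-(M:ℤ)) (M:ℤ), J n + J (-n)
      = if n = 0 then 2*(δ:ℂ) else 0 := by
    intro n _
    rcases eq_or_ne n 0 with rfl | hn
    · simp only [hJ, if_pos rfl, neg_zero, if_true]; ring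
    · have hn' : -n ≠ 0 := neg_ne_zero.mpr hn
      simp only [hJ, if_neg hn, if_neg hn']
      have h1 : (-1:ℂ)^(-n) = (-1:ℂ)^n := by
        rw [zpow_neg]
        rcases Int.even_or_odd n with he | ho
        · rw [he.neg_one_zpow]; norm_num
        · rw [ho.neg_one_zpow]; norm_num
      rw [h1]
      have hI : Complex.I * ((n:ℂ) * ((π:ℂ)/δ)) ≠ 0 := by
        apply mul_ne_zero Complex.I_ne_zero
        apply mul_ne_zero (by exact_mod_cast Int.cast_ne_zero.mpr hn)
        rw [div_ne_zero_iff]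
        constructor
        · exact_mod_cast Real.pi_ne_zero
        · exact_mod_cast hδ.ne'
      push_cast
      field_simp
      ring
  have h2 : (2:ℂ) * ∑ n ∈ Finset.Icc (-(M:ℤ)) (M:ℤ), J n = 2 * δ := by
    calc (2:ℂ) * ∑ n ∈ Finset.Icc (-(M:ℤ)) (M:ℤ), J n
        = ∑ n ∈ Finset.Icc (-(M:ℤ)) (M:ℤ), (J n + J (-n)) := by
          rw [Finset.sum_add_distrib, ← hsymm]; ring
      _ = ∑ n ∈ Finset.Icc (-(M:ℤ)) (M:ℤ), (if n = 0 then 2*(δ:ℂ) else 0) :=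
          Finset.sum_congr rfl hpair
      _ = 2 * δ := by
          rw [Finset.sum_ite_eq' (Finset.Icc (-(M:ℤ)) (M:ℤ)) 0 (fun _ => 2*(δ:ℂ))]
          simp
  linear_combination h2 / 2


noncomputable def denf (a δ : ℝ) : ℝ → ℂ := fun u =>
  2 * Complex.I * Complex.sin ((((π/δ) * (a-u)/2 : ℝ)) : ℂ)

noncomputable def gfun (a δ : ℝ) (f f' : ℝ → ℂ) : ℝ → ℂ := fun u =>
  if u = a then Complex.I * f' a / ((π/δ : ℝ) : ℂ)
  else (f u - f a) / denf a δ u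

lemma denf_zero (a δ : ℝ) : denf a δ a = 0 := by
  have h0 : ((π/δ) * (a-a)/2 : ℝ) = 0 := by ring
  simp only [denf, h0, Complex.ofReal_zero, Complex.sin_zero, mul_zero]

lemma den_ne (a δ : ℝ) (hδ : 0 < δ) {u : ℝ} (hu : u ∈ Set.Ico (a-δ) a) :
    denf a δ u ≠ 0 := by
  rw [denf]
  have hθpos : 0 < (π/δ) * (a-u)/2 := by
    have h1 : 0 < a - u := by linarith [hu.2]
    have h2 : 0 < π/δ := div_pos Real.pi_pos hδ
    positivity
  have hθlt : (π/δ) * (a-u)/2 < π := by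
    have h1 : a - u ≤ δ := by linarith [hu.1]
    have h2 : 0 < π/δ := div_pos Real.pi_pos hδ
    have h3 : (π/δ) * (a-u) ≤ (π/δ) * δ := by nlinarith
    have hπ : (π/δ) * δ = π := by field_simp
    nlinarith [Real.pi_pos]
  have hsin : 0 < Real.sin ((π/δ) * (a-u)/2) := Real.sin_pos_of_pos_of_lt_pi hθpos hθlt
  rw [← Complex.ofReal_sin]
  refine mul_ne_zero (mul_ne_zero two_ne_zero Complex.I_ne_zero) ?_
  exact_mod_cast hsin.ne'

lemma den_hasDeriv (a δ : ℝ) :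
    HasDerivAt (denf a δ) (-(Complex.I * ((π/δ : ℝ) : ℂ))) a := by
  rw [show denf a δ = fun v : ℝ => 2 * Complex.I * Complex.sin ((((π/δ) * (a-v)/2 : ℝ)) : ℂ) from rfl]
  have hθ : HasDerivAt (fun v : ℝ => (π/δ) * (a-v)/2) (-(π/δ)/2) a := by
    simpa [neg_div] using (((hasDerivAt_id a).const_sub a).const_mul (π/δ)).div_const 2
  have hsin : HasDerivAt (fun y : ℝ => Complex.sin ↑y)
      (Complex.cos ((((π/δ) * (a-a)/2 : ℝ)) : ℂ)) ((π/δ) * (a-a)/2) :=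
    (Complex.hasDerivAt_sin _).comp_ofReal
  have h2 := (hsin.scomp a hθ).const_mul (2 * Complex.I)
  refine h2.congr_deriv ?_
  have h0 : ((π/δ) * (a-a)/2 : ℝ) = 0 := by ring
  rw [h0]
  simp only [Complex.ofReal_zero, Complex.cos_zero, Complex.real_smul]
  push_cast
  ring

lemma gfun_contOn (a δ : ℝ) (hδ : 0 < δ) (f f' : ℝ → ℂ)
    (hdiff : ∀ x ∈ Set.Icc (a - δ) a, HasDerivAt f (f' x) x) :
    ContinuousOn (gfun a δ f f') (Set.Icc (a-δ) a) := by
  have hωne : ((π/δ : ℝ) : ℂ) ≠ 0 := by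
    have : (0:ℝ) < π/δ := div_pos Real.pi_pos hδ
    exact_mod_cast this.ne'
  have hcf : ContinuousOn f (Set.Icc (a-δ) a) :=
    fun x hx => (hdiff x hx).continuousAt.continuousWithinAt
  have hcden : Continuous (denf a δ) := by
    rw [show denf a δ = fun v : ℝ => 2 * Complex.I * Complex.sin ((((π/δ) * (a-v)/2 : ℝ)) : ℂ) from rfl]
    apply Continuous.mul continuous_const
    exact Complex.continuous_sin.comp (by continuity)
  intro u hu
  rcases eq_or_ne u a with heq | hne
  · subst heq
    rw [← continuousWithinAt_diff_self]
    set s' := Set.Icc (u-δ) u \ {u} with hs'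
    have hmono : 𝓝[s'] u ≤ 𝓝[≠] u := nhdsWithin_mono u (fun x hx => hx.2)
    have hNum : Tendsto (fun v => (f v - f u) / ((v - u : ℝ) : ℂ)) (𝓝[s'] u) (𝓝 (f' u)) := by
      have h := hasDerivAt_iff_tendsto_slope.mp (hdiff u (by constructor <;> linarith))
      refine (h.mono_left hmono).congr (fun v => ?_)
      rw [slope_def_module, Complex.real_smul]
      push_cast
      rw [div_eq_inv_mul]
    have hDen : Tendsto (fun v => denf u δ v / ((v - u : ℝ) : ℂ)) (𝓝[s'] u)
        (𝓝 (-(Complex.I * ((π/δ : ℝ) : ℂ)))) := by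
      have h := hasDerivAt_iff_tendsto_slope.mp (den_hasDeriv u δ)
      refine (h.mono_left hmono).congr (fun v => ?_)
      rw [slope_def_module, denf_zero, sub_zero, Complex.real_smul]
      push_cast
      rw [div_eq_inv_mul]
    have hq : Tendsto (fun v => ((f v - f u) / ((v - u : ℝ) : ℂ)) / (denf u δ v / ((v - u : ℝ) : ℂ)))
        (𝓝[s'] u) (𝓝 (f' u / (-(Complex.I * ((π/δ : ℝ) : ℂ))))) :=
      hNum.div hDen (by
        simp only [neg_ne_zero]
        exact mul_ne_zero Complex.I_ne_zero hωne)
    have hval : f' u / (-(Complex.I * ((π/δ : ℝ) : ℂ))) = Complex.I * f' u / ((π/δ : ℝ) : ℂ) := by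
      rw [div_eq_div_iff (neg_ne_zero.mpr (mul_ne_zero Complex.I_ne_zero hωne)) hωne]
      linear_combination (f' u * ((π/δ:ℝ):ℂ)) * Complex.I_sq
    rw [ContinuousWithinAt]
    have hga : gfun u δ f f' u = Complex.I * f' u / ((π/δ : ℝ) : ℂ) := if_pos rfl
    rw [hga, ← hval]
    refine hq.congr' ?_
    filter_upwards [self_mem_nhdsWithin] with v hv
    have hva : v ≠ u := hv.2
    have hvc2 : ((v:ℂ) - (u:ℂ)) ≠ 0 := sub_ne_zero.mpr (by exact_mod_cast hva)
    have key : ((f v - f u) / ((v - u : ℝ) : ℂ)) / (denf u δ v / ((v - u : ℝ) : ℂ))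
        = (f v - f u) / denf u δ v := by
      rcases eq_or_ne (denf u δ v) 0 with h | h
      · simp [h]
      · rw [div_div_div_cancel_right₀]
        push_cast
        exact hvc2
    rw [key]
    exact (if_neg hva).symm
  · have hu' : u ∈ Set.Ico (a-δ) a := ⟨hu.1, lt_of_le_of_ne hu.2 hne⟩
    have hq : ContinuousWithinAt (fun v => (f v - f a) / denf a δ v) (Set.Icc (a-δ) a) u :=
      ((hcf u hu).sub continuousWithinAt_const).div
        (hcden.continuousAt.continuousWithinAt) (den_ne a δ hδ hu')
    refine hq.congr_of_eventuallyEq ?_ (if_neg hne)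
    have h : ∀ᶠ v in 𝓝 u, v ≠ a := isOpen_compl_singleton.eventually_mem hne
    filter_upwards [h.filter_mono nhdsWithin_le_nhds] with v hv
    exact if_neg hv


lemma rl (G : ℝ → ℂ) (d : ℕ → ℝ) (hd : Tendsto (fun M => -(d M)/(2*π)) atTop (cocompact ℝ)) :
    Tendsto (fun M => ∫ v : ℝ, ce (d M * v) * G v) atTop (𝓝 0) := by
  have h0 := (Real.tendsto_integral_exp_smul_cocompact G).comp hd
  convert h0 using 2 with M
  simp only [Function.comp]
  congr 1
  funext v
  rw [Circle.smul_def, Real.fourierChar_apply, ce]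
  congr 1
  have hπ : 2 * π * -(v * (-d M / (2 * π))) = d M * v := by
    field_simp
  rw [← hπ]

lemma tendsto_int_zero (a δ : ℝ) (hδ : 0 < δ) (g : ℝ → ℂ) (c : ℕ → ℝ)
    (hc : Tendsto (fun M => c M / (2*π)) atTop (cocompact ℝ)) :
    Tendsto (fun M => ∫ u in (a-δ)..a, g u * ce (c M * (a-u))) atTop (𝓝 0) := by
  set G := (Set.Ioc (a-δ) a).indicator g with hG
  have key : ∀ M, (∫ u in (a-δ)..a, g u * ce (c M * (a-u)))
      = ce (c M * a) * ∫ v : ℝ, ce (-(c M) * v) * G v := by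
    intro M
    have e1 : ∀ u, g u * ce (c M * (a-u)) = ce (c M * a) * (ce (-(c M) * u) * g u) := by
      intro u
      rw [show c M * (a-u) = c M * a + (-(c M) * u) by ring, ce_add]
      ring
    rw [intervalIntegral.integral_congr (g := fun u => ce (c M * a) * (ce (-(c M) * u) * g u))
      (fun u _ => e1 u)]
    rw [intervalIntegral.integral_const_mul]
    congr 1
    rw [intervalIntegral.integral_of_le (by linarith : a - δ ≤ a),
      ← MeasureTheory.integral_indicator measurableSet_Ioc]
    congr 1
    funext v
    rw [hG, Set.indicator_mul_right]
  have hrl := rl G (fun M => -(c M)) (by simpa [neg_neg] using hc)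
  rw [tendsto_zero_iff_norm_tendsto_zero]
  have hn := (tendsto_zero_iff_norm_tendsto_zero.mp (by simpa using hrl))
  refine hn.congr (fun M => ?_)
  rw [key M, norm_mul]
  simp [ce_norm]


set_option maxHeartbeats 1000000 in
/-- Corollary I of the paper (left-hand local Fourier series): for `f` differentiable
on `[a-δ, a]` with integrable derivative,
`f(a)/2 = (1/(2δ)) lim_{M→∞} ∑_{n=-M}^{M} e^{iπna/δ} ∫_{a-δ}^{a} f(u) e^{-iπnu/δ} du`. -/
theorem fourier_corollary_left (a δ : ℝ) (hδ : 0 < δ)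
    (f f' : ℝ → ℂ)
    (hdiff : ∀ x ∈ Set.Icc (a - δ) a, HasDerivAt f (f' x) x)
    (hint : IntervalIntegrable f' volume (a - δ) a) :
    Filter.Tendsto (fun M : ℕ => ((1 / (2 * δ) : ℝ) : ℂ) *
        ∑ n ∈ Finset.Icc (-(M : ℤ)) (M : ℤ),
          Complex.exp (Complex.I * Real.pi * n * a / δ) *
            ∫ u in (a - δ)..a, f u * Complex.exp (-(Complex.I * Real.pi * n * u) / δ))
      Filter.atTop (nhds (f a / 2)) := by
  have hle : a - δ ≤ a := by linarith
  have hδc : (δ : ℂ) ≠ 0 := by exact_mod_cast hδ.ne'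
  have hωpos : (0:ℝ) < π/δ := div_pos Real.pi_pos hδ
  have huIcc : Set.uIcc (a-δ) a = Set.Icc (a-δ) a := Set.uIcc_of_le hle
  have hcf : ContinuousOn f (Set.Icc (a-δ) a) :=
    fun x hx => (hdiff x hx).continuousAt.continuousWithinAt
  set g : ℝ → ℂ := gfun a δ f f' with hg
  have hgc : ContinuousOn g (Set.Icc (a-δ) a) := gfun_contOn a δ hδ f f' hdiff
  have hce : ∀ c : ℝ, Continuous (fun u : ℝ => ce (c * (a-u))) :=
    fun c => ce_continuous.comp (continuous_const.mul (continuous_const.sub continuous_id))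
  have hfint : ∀ c : ℝ, IntervalIntegrable (fun u => f u * ce (c*(a-u))) volume (a-δ) a := by
    intro c
    apply ContinuousOn.intervalIntegrable
    rw [huIcc]
    exact hcf.mul (hce c).continuousOn
  have hgint : ∀ c : ℝ, IntervalIntegrable (fun u => g u * ce (c*(a-u))) volume (a-δ) a := by
    intro c
    apply ContinuousOn.intervalIntegrable
    rw [huIcc]
    exact hgc.mul (hce c).continuousOn
  have hae : ∀ᵐ (x : ℝ) ∂(volume : Measure ℝ), x ≠ a := by
    rw [MeasureTheory.ae_iff]
    simp only [not_not, Set.setOf_eq_eq_singleton]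
    exact Real.volume_singleton
  have key : ∀ M : ℕ, (∑ n ∈ Finset.Icc (-(M : ℤ)) (M : ℤ),
        Complex.exp (Complex.I * Real.pi * n * a / δ) *
          ∫ u in (a - δ)..a, f u * Complex.exp (-(Complex.I * Real.pi * n * u) / δ))
      = ↑δ * f a + ((∫ u in (a-δ)..a, g u * ce ((((M:ℝ)+1/2)*(π/δ)) * (a-u)))
          - ∫ u in (a-δ)..a, g u * ce ((-(((M:ℝ)+1/2)*(π/δ))) * (a-u))) := by
    intro M
    have step1 : ∀ n ∈ Finset.Icc (-(M:ℤ)) (M:ℤ),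
        Complex.exp (Complex.I * Real.pi * n * a / δ) *
          (∫ u in (a - δ)..a, f u * Complex.exp (-(Complex.I * Real.pi * n * u) / δ))
        = ∫ u in (a-δ)..a, f u * ce (((n:ℝ)*(π/δ)) * (a-u)) := by
      intro n _
      rw [← intervalIntegral.integral_const_mul]
      apply intervalIntegral.integral_congr
      intro u _
      simp only
      rw [ce, show Complex.exp (Complex.I * ↑π * ↑n * ↑a / ↑δ) *
          (f u * Complex.exp (-(Complex.I * ↑π * ↑n * ↑u) / ↑δ))
        = f u * (Complex.exp (Complex.I * ↑π * ↑n * ↑a / ↑δ) *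
          Complex.exp (-(Complex.I * ↑π * ↑n * ↑u) / ↑δ)) by ring, ← Complex.exp_add]
      congr 1
      push_cast
      field_simp
      ring
    rw [Finset.sum_congr rfl step1,
      ← intervalIntegral.integral_finset_sum
        (f := fun (n : ℤ) (u : ℝ) => f u * ce (((n:ℝ)*(π/δ)) * (a-u))) (fun n _ => hfint _)]
    have step2 : Set.EqOn (fun u => ∑ n ∈ Finset.Icc (-(M:ℤ)) (M:ℤ), f u * ce (((n:ℝ)*(π/δ)) * (a-u)))
        (fun u => (f u - f a) * (∑ n ∈ Finset.Icc (-(M:ℤ)) (M:ℤ), ce ((n:ℝ) * ((π/δ) * (a-u))))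
          + f a * (∑ n ∈ Finset.Icc (-(M:ℤ)) (M:ℤ), ce ((n:ℝ) * ((π/δ) * (a-u)))))
        (Set.uIcc (a-δ) a) := by
      intro u _
      simp only
      have hsum : (∑ n ∈ Finset.Icc (-(M:ℤ)) (M:ℤ), f u * ce (((n:ℝ)*(π/δ)) * (a-u)))
          = f u * ∑ n ∈ Finset.Icc (-(M:ℤ)) (M:ℤ), ce ((n:ℝ) * ((π/δ) * (a-u))) := by
        rw [Finset.mul_sum]
        apply Finset.sum_congr rfl
        intro n _
        congr 2
        ring
      rw [hsum]
      ring
    rw [intervalIntegral.integral_congr step2]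
    have hDcont : Continuous (fun u => ∑ n ∈ Finset.Icc (-(M:ℤ)) (M:ℤ), ce ((n:ℝ) * ((π/δ) * (a-u)))) := by
      apply continuous_finset_sum
      intro n _
      exact ce_continuous.comp
        (continuous_const.mul (continuous_const.mul (continuous_const.sub continuous_id)))
    have hint1 : IntervalIntegrable
        (fun u => (f u - f a) * (∑ n ∈ Finset.Icc (-(M:ℤ)) (M:ℤ), ce ((n:ℝ) * ((π/δ) * (a-u)))))
        volume (a-δ) a := by
      apply ContinuousOn.intervalIntegrable
      rw [huIcc]
      exact (hcf.sub continuousOn_const).mul hDcont.continuousOn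
    have hint2 : IntervalIntegrable
        (fun u => f a * (∑ n ∈ Finset.Icc (-(M:ℤ)) (M:ℤ), ce ((n:ℝ) * ((π/δ) * (a-u)))))
        volume (a-δ) a := (continuous_const.mul hDcont).intervalIntegrable _ _
    rw [intervalIntegral.integral_add hint1 hint2, intervalIntegral.integral_const_mul]
    -- kernel part
    have hker : (∫ u in (a-δ)..a, ∑ n ∈ Finset.Icc (-(M:ℤ)) (M:ℤ), ce ((n:ℝ) * ((π/δ) * (a-u)))) = (δ:ℂ) := by
      rw [intervalIntegral.integral_finset_sum
        (f := fun (n : ℤ) (u : ℝ) => ce ((n:ℝ) * ((π/δ) * (a-u)))) (fun n _ =>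
        ((ce_continuous.comp
          (continuous_const.mul (continuous_const.mul (continuous_const.sub continuous_id)))).intervalIntegrable _ _ :
          IntervalIntegrable (fun u => ce ((n:ℝ) * ((π/δ) * (a-u)))) volume (a-δ) a))]
      have : ∀ n ∈ Finset.Icc (-(M:ℤ)) (M:ℤ),
          (∫ u in (a-δ)..a, ce ((n:ℝ) * ((π/δ) * (a-u)))) = ∫ u in (a-δ)..a, ce (((n:ℝ) * (π/δ)) * (a-u)) := by
        intro n _
        apply intervalIntegral.integral_congr
        intro u _
        simp only
        congr 1
        ring
      rw [Finset.sum_congr rfl this]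
      exact kernel_int a δ hδ M
    rw [hker]
    -- Dirichlet part
    have hdir : (∫ u in (a-δ)..a, (f u - f a) * (∑ n ∈ Finset.Icc (-(M:ℤ)) (M:ℤ), ce ((n:ℝ) * ((π/δ) * (a-u)))))
        = (∫ u in (a-δ)..a, g u * ce ((((M:ℝ)+1/2)*(π/δ)) * (a-u)))
          - ∫ u in (a-δ)..a, g u * ce ((-(((M:ℝ)+1/2)*(π/δ))) * (a-u)) := by
      rw [← intervalIntegral.integral_sub (hgint _) (hgint _)]
      apply intervalIntegral.integral_congr_ae
      filter_upwards [hae] with u hua hu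
      rw [Set.uIoc_of_le hle] at hu
      have hu' : u ∈ Set.Ico (a-δ) a := ⟨hu.1.le, lt_of_le_of_ne hu.2 hua⟩
      have hden := den_ne a δ hδ hu'
      have hgu : g u = (f u - f a) / denf a δ u := by
        rw [hg, gfun, if_neg hua]
      have hdenf : denf a δ u = ce ((π/δ) * (a-u) / 2) - ce (-((π/δ) * (a-u) / 2)) := by
        rw [denf, ce_sub_neg]
      have hd := dirichlet ((π/δ) * (a-u)) M
      have harg1 : (((M:ℝ)+1/2)*(π/δ)) * (a-u) = ((M:ℝ) + 1/2) * ((π/δ) * (a-u)) := by ring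
      have harg2 : (-(((M:ℝ)+1/2)*(π/δ))) * (a-u) = -(((M:ℝ) + 1/2) * ((π/δ) * (a-u))) := by ring
      rw [hgu, harg1, harg2, ← mul_sub, ← hd, ← hdenf]
      rw [div_mul_eq_mul_div (f u - f a), mul_div_assoc (f u - f a), mul_div_cancel_right₀ _ hden]
    rw [hdir]
    ring
  -- limits
  have hA : Tendsto (fun M : ℕ => ∫ u in (a-δ)..a, g u * ce ((((M:ℝ)+1/2)*(π/δ)) * (a-u)))
      atTop (𝓝 0) := by
    apply tendsto_int_zero a δ hδ g _
    have h1 : Tendsto (fun M : ℕ => ((M:ℝ)+1/2) * ((π/δ)/(2*π))) atTop atTop :=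
      Tendsto.atTop_mul_const (by positivity)
        (tendsto_atTop_add_const_right atTop (1/2) tendsto_natCast_atTop_atTop)
    rw [cocompact_eq_atBot_atTop]
    exact ((h1.congr (fun M => by ring)).mono_right le_sup_right)
  have hB : Tendsto (fun M : ℕ => ∫ u in (a-δ)..a, g u * ce ((-(((M:ℝ)+1/2)*(π/δ))) * (a-u)))
      atTop (𝓝 0) := by
    apply tendsto_int_zero a δ hδ g _
    have h1 : Tendsto (fun M : ℕ => ((M:ℝ)+1/2) * ((π/δ)/(2*π))) atTop atTop :=
      Tendsto.atTop_mul_const (by positivity)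
        (tendsto_atTop_add_const_right atTop (1/2) tendsto_natCast_atTop_atTop)
    have h2 : Tendsto (fun M : ℕ => -(((M:ℝ)+1/2) * ((π/δ)/(2*π)))) atTop atBot :=
      tendsto_neg_atTop_atBot.comp h1
    rw [cocompact_eq_atBot_atTop]
    exact ((h2.congr (fun M => by ring)).mono_right le_sup_left)
  have hfinal : Tendsto (fun M : ℕ => ((1 / (2 * δ) : ℝ) : ℂ) *
      (↑δ * f a + ((∫ u in (a-δ)..a, g u * ce ((((M:ℝ)+1/2)*(π/δ)) * (a-u)))
        - ∫ u in (a-δ)..a, g u * ce ((-(((M:ℝ)+1/2)*(π/δ))) * (a-u)))))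
      atTop (𝓝 (((1 / (2 * δ) : ℝ) : ℂ) * (↑δ * f a + (0 - 0)))) := by
    exact (tendsto_const_nhds.add (hA.sub hB)).const_mul _
  have hlim : (((1 / (2 * δ) : ℝ) : ℂ) * (↑δ * f a + (0 - 0))) = f a / 2 := by
    push_cast
    field_simp
    ring
  rw [← hlim]
  refine hfinal.congr (fun M => ?_)
  rw [key M]
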